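/- Let j be a positive integer. If F ∈ L^{2j} is a majorant of an integrable function f, then f ∈ L^{2j} and ‖f‖_{2j} ≤ ‖F‖_{2j}. -/

import Mathlib

open MeasureTheory Complex
open scoped Real ENNReal

noncomputable section

instance : Fact (0 < 2 * Real.pi) := ⟨by positivity⟩

abbrev Circle2Pi := AddCircle (2 * Real.pi)

abbrev circleMeasure : Measure Circle2Pi := AddCircle.haarAddCircle

/-- `F` is a majorant of `f`. -/
def IsMajorant (F f : Circle2Pi → ℂ) : Prop :=
  ∀ n : ℤ, (fourierCoeff F n).im = 0 ∧ ‖fourierCoeff f n‖ ≤ (fourierCoeff F n).re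

lemma integrable_contMul {h : Circle2Pi → ℂ} (hh : Integrable h circleMeasure)
    (g : C(Circle2Pi, ℂ)) : Integrable (fun x => g x * h x) circleMeasure :=
  hh.bdd_mul g.continuous.aestronglyMeasurable (Filter.Eventually.of_forall fun x => g.norm_coe_le_norm x)

lemma integral_contMul_eq_zero {h : Circle2Pi → ℂ} (hh : Integrable h circleMeasure)
    (hcoeff : ∀ n, fourierCoeff h n = 0) (g : C(Circle2Pi, ℂ)) :
    ∫ x, g x * h x ∂circleMeasure = 0 := by
  let L0 : C(Circle2Pi, ℂ) →ₗ[ℂ] ℂ :=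
    { toFun := fun g => ∫ x, g x * h x ∂circleMeasure
      map_add' := fun g₁ g₂ => by
        simp only [ContinuousMap.add_apply, add_mul]
        exact integral_add (integrable_contMul hh g₁) (integrable_contMul hh g₂)
      map_smul' := fun c g => by
        simp only [ContinuousMap.smul_apply, smul_eq_mul, mul_assoc, RingHom.id_apply]
        exact integral_const_mul c _ }
  have hLb : ∀ g : C(Circle2Pi, ℂ), ‖L0 g‖ ≤ (∫ x, ‖h x‖ ∂circleMeasure) * ‖g‖ := by
    intro g
    refine (norm_integral_le_integral_norm _).trans ?_
    rw [← integral_mul_const]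
    refine integral_mono (integrable_contMul hh g).norm (hh.norm.mul_const ‖g‖) (fun x => ?_)
    rw [norm_mul, mul_comm]
    exact mul_le_mul_of_nonneg_left (g.norm_coe_le_norm x) (norm_nonneg _)
  let L : C(Circle2Pi, ℂ) →L[ℂ] ℂ := L0.mkContinuous _ hLb
  have hspan : Submodule.span ℂ (Set.range (@fourier (2 * Real.pi))) ≤ L.ker := by
    rw [Submodule.span_le]
    rintro - ⟨n, rfl⟩
    have : L (fourier n) = fourierCoeff h (-n) := by
      simp only [L, L0, LinearMap.mkContinuous_apply, LinearMap.coe_mk, AddHom.coe_mk]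
      rw [fourierCoeff]
      simp [smul_eq_mul]
    simp [SetLike.mem_coe, LinearMap.mem_ker, this, hcoeff]
  have hclosed : IsClosed ((L.ker : Submodule ℂ C(Circle2Pi, ℂ)) : Set C(Circle2Pi, ℂ)) :=
    ContinuousLinearMap.isClosed_ker L
  have htop := Submodule.topologicalClosure_minimal _ hspan hclosed
  rw [span_fourier_closure_eq_top] at htop
  have : g ∈ L.ker := htop (Submodule.mem_top)
  simpa [L, L0, LinearMap.mem_ker] using this

/-- Clamp a complex number to the closed unit disc. -/
def clampC : C(ℂ, ℂ) :=
  ⟨fun z => (max 1 ‖z‖)⁻¹ • z, by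
    refine Continuous.smul (f := fun z : ℂ => (max 1 ‖z‖)⁻¹) (g := fun z => z) ?_ ?_
    · exact (continuous_const.max continuous_norm).inv₀
        (fun z => ne_of_gt (lt_of_lt_of_le one_pos (le_max_left _ _)))
    · exact continuous_id⟩

lemma clampC_norm_le (z : ℂ) : ‖clampC z‖ ≤ 1 := by
  have h1 : (0:ℝ) < max 1 ‖z‖ := lt_of_lt_of_le one_pos (le_max_left _ _)
  simp only [clampC, ContinuousMap.coe_mk, norm_smul, norm_inv, Real.norm_eq_abs,
    abs_of_pos h1]
  rw [inv_mul_le_iff₀ h1, mul_one]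
  exact le_max_right _ _

lemma clampC_of_norm_le {z : ℂ} (hz : ‖z‖ ≤ 1) : clampC z = z := by
  show (max 1 ‖z‖)⁻¹ • z = z
  rw [max_eq_left hz, inv_one, one_smul]

lemma setIntegral_eq_zero_of_coeffs_zero {h : Circle2Pi → ℂ} (hh : Integrable h circleMeasure)
    (hcoeff : ∀ n, fourierCoeff h n = 0) {s : Set Circle2Pi} (hs : MeasurableSet s) :
    ∫ x in s, h x ∂circleMeasure = 0 := by
  classical
  set χ : Circle2Pi → ℂ := s.indicator (fun _ => (1:ℂ)) with hχdef
  have hχmem : MemLp χ 2 circleMeasure :=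
    memLp_indicator_const 2 hs 1 (Or.inr (measure_ne_top _ s))
  set χLp : Lp ℂ 2 circleMeasure := hχmem.toLp χ with hχLp
  have hdense : DenseRange (ContinuousMap.toLp (E := ℂ) 2 circleMeasure ℂ) :=
    ContinuousMap.toLp_denseRange ℂ circleMeasure ℂ (by norm_num)
  obtain ⟨u, humem, hutend⟩ := mem_closure_iff_seq_limit.1 (hdense χLp)
  choose g hg using humem
  -- eLpNorm convergence
  have htendsn : Filter.Tendsto (fun n => eLpNorm ((g n : Circle2Pi → ℂ) - χ) 2 circleMeasure)
      Filter.atTop (nhds 0) := by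
    have h1 : ∀ n, eLpNorm ((g n : Circle2Pi → ℂ) - χ) 2 circleMeasure
        = ENNReal.ofReal ‖u n - χLp‖ := by
      intro n
      have he : ((g n : Circle2Pi → ℂ) - χ) =ᵐ[circleMeasure] ⇑(u n - χLp) := by
        have h2 : ⇑(u n - χLp) =ᵐ[circleMeasure] ⇑(u n) - ⇑χLp := Lp.coeFn_sub _ _
        have h3 : ⇑(u n) =ᵐ[circleMeasure] (g n : Circle2Pi → ℂ) := by
          rw [← hg n]; exact ContinuousMap.coeFn_toLp (𝕜 := ℂ) circleMeasure (g n)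
        have h4 : ⇑χLp =ᵐ[circleMeasure] χ := hχmem.coeFn_toLp
        filter_upwards [h2, h3, h4] with x h2 h3 h4
        rw [h2]; simp only [Pi.sub_apply]; rw [h3, h4]
      rw [eLpNorm_congr_ae he, Lp.norm_def,
        ENNReal.ofReal_toReal (Lp.eLpNorm_ne_top _)]
    simp_rw [h1]
    have : Filter.Tendsto (fun n => ‖u n - χLp‖) Filter.atTop (nhds 0) := by
      rw [← tendsto_iff_norm_sub_tendsto_zero] ; exact hutend
    have := (ENNReal.continuous_ofReal.tendsto 0).comp this
    simpa [Function.comp_def] using this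
  have hinmeas : TendstoInMeasure circleMeasure (fun n => (g n : Circle2Pi → ℂ))
      Filter.atTop χ :=
    tendstoInMeasure_of_tendsto_eLpNorm (by norm_num)
      (fun n => (g n).continuous.aestronglyMeasurable) hχmem.aestronglyMeasurable htendsn
  obtain ⟨ns, -, hae⟩ := hinmeas.exists_seq_tendsto_ae
  -- clamped sequence
  set v : ℕ → C(Circle2Pi, ℂ) := fun k => clampC.comp (g (ns k)) with hv
  have hvzero : ∀ k, ∫ x, v k x * h x ∂circleMeasure = 0 := fun k =>
    integral_contMul_eq_zero hh hcoeff _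
  have hvtend : ∀ᵐ x ∂circleMeasure,
      Filter.Tendsto (fun k => v k x * h x) Filter.atTop (nhds (χ x * h x)) := by
    filter_upwards [hae] with x hx
    have h1 : Filter.Tendsto (fun k => v k x) Filter.atTop (nhds (χ x)) := by
      have h2 : Filter.Tendsto (fun k => clampC (g (ns k) x)) Filter.atTop
          (nhds (clampC (χ x))) := (clampC.continuous.tendsto _).comp hx
      have h3 : clampC (χ x) = χ x := by
        apply clampC_of_norm_le
        by_cases hxs : x ∈ s <;> simp [hχdef, Set.indicator, hxs]
      rwa [h3] at h2
    exact h1.mul tendsto_const_nhds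
  have hmain : Filter.Tendsto (fun k => ∫ x, v k x * h x ∂circleMeasure) Filter.atTop
      (nhds (∫ x, χ x * h x ∂circleMeasure)) := by
    refine tendsto_integral_of_dominated_convergence (fun x => ‖h x‖)
      (fun k => ((v k).continuous.aestronglyMeasurable.mul hh.aestronglyMeasurable))
      hh.norm ?_ hvtend
    intro k
    filter_upwards with x
    rw [norm_mul]
    calc ‖v k x‖ * ‖h x‖ ≤ 1 * ‖h x‖ :=
          mul_le_mul_of_nonneg_right (clampC_norm_le _) (norm_nonneg _)
      _ = ‖h x‖ := one_mul _
  have hzero : ∫ x, χ x * h x ∂circleMeasure = 0 := by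
    have := hmain
    simp_rw [hvzero] at this
    exact (tendsto_nhds_unique tendsto_const_nhds this).symm
  have hind : ∫ x, χ x * h x ∂circleMeasure = ∫ x in s, h x ∂circleMeasure := by
    rw [← integral_indicator hs]
    congr 1
    ext x
    by_cases hxs : x ∈ s <;> simp [hχdef, Set.indicator, hxs]
  rwa [hind] at hzero

/-- Uniqueness: an integrable function with vanishing Fourier coefficients is a.e. zero. -/
lemma ae_eq_zero_of_coeffs_zero {h : Circle2Pi → ℂ} (hh : Integrable h circleMeasure)
    (hcoeff : ∀ n, fourierCoeff h n = 0) : h =ᵐ[circleMeasure] 0 :=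
  ae_eq_zero_of_forall_setIntegral_eq_of_sigmaFinite
    (fun s hs _ => hh.integrableOn)
    (fun s hs _ => setIntegral_eq_zero_of_coeffs_zero hh hcoeff hs)

lemma norm_fourier_apply (n : ℤ) (x : Circle2Pi) : ‖fourier n x‖ = 1 := Circle.norm_coe _

lemma fourierCoeff_eq_integral_mul (u : Circle2Pi → ℂ) (n : ℤ) :
    fourierCoeff u n = ∫ t, fourier (-n) t * u t ∂circleMeasure := by
  simp [fourierCoeff, smul_eq_mul]

lemma fourierCoeff_congr_ae' {u v : Circle2Pi → ℂ} (h : u =ᵐ[circleMeasure] v) (n : ℤ) :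
    fourierCoeff u n = fourierCoeff v n := by
  rw [fourierCoeff_eq_integral_mul, fourierCoeff_eq_integral_mul]
  exact integral_congr_ae (h.mono fun x hx => by simp only []; rw [hx])

lemma fourierCoeff_sub {u v : Circle2Pi → ℂ} (hu : Integrable u circleMeasure)
    (hv : Integrable v circleMeasure) (n : ℤ) :
    fourierCoeff (u - v) n = fourierCoeff u n - fourierCoeff v n := by
  simp only [fourierCoeff_eq_integral_mul]
  rw [← integral_sub (integrable_contMul hu (fourier (-n))) (integrable_contMul hv (fourier (-n)))]
  congr 1; ext t; simp [Pi.sub_apply, mul_sub]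

lemma summable_sq_fourierCoeff {u : Circle2Pi → ℂ} (hu : MemLp u 2 circleMeasure) :
    Summable (fun n : ℤ => ‖fourierCoeff u n‖ ^ 2) := by
  have h := lp.memℓp (fourierBasis.repr (hu.toLp u))
  rw [memℓp_gen_iff (by norm_num : 0 < (2 : ℝ≥0∞).toReal)] at h
  have h2 : ∀ n : ℤ, ‖fourierBasis.repr (hu.toLp u) n‖ ^ (2 : ℝ≥0∞).toReal
      = ‖fourierCoeff u n‖ ^ 2 := by
    intro n
    rw [fourierBasis_repr, fourierCoeff_congr_ae' hu.coeFn_toLp]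
    norm_num [Real.rpow_natCast]
  simpa only [h2] using h

/-- An integrable function with square-summable Fourier coefficients is in `L²`. -/
lemma memℒp_two_of_summable_sq {f : Circle2Pi → ℂ} (hf : Integrable f circleMeasure)
    (hsum : Summable (fun n : ℤ => ‖fourierCoeff f n‖ ^ 2)) :
    MemLp f 2 circleMeasure := by
  have hmem : Memℓp (fun n : ℤ => fourierCoeff f n) 2 := by
    rw [memℓp_gen_iff (by norm_num : 0 < (2 : ℝ≥0∞).toReal)]
    have : ∀ n : ℤ, ‖fourierCoeff f n‖ ^ (2 : ℝ≥0∞).toReal = ‖fourierCoeff f n‖ ^ 2 := by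
      intro n; norm_num [Real.rpow_natCast]
    simpa only [this] using hsum
  set c : lp (fun _ : ℤ => ℂ) 2 := ⟨_, hmem⟩ with hc
  set g : Lp ℂ 2 circleMeasure := fourierBasis.repr.symm c with hgdef
  have hgc : ∀ m, fourierCoeff (⇑g : Circle2Pi → ℂ) m = fourierCoeff f m := by
    intro m
    rw [← fourierBasis_repr]
    rw [hgdef, LinearIsometryEquiv.apply_symm_apply]
  have hgi : Integrable (⇑g : Circle2Pi → ℂ) circleMeasure :=
    (Lp.memLp g).integrable (by norm_num)
  have hdiff : (f - ⇑g) =ᵐ[circleMeasure] 0 :=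
    ae_eq_zero_of_coeffs_zero (hf.sub hgi)
      (fun m => by rw [fourierCoeff_sub hf hgi, hgc, sub_self])
  have hfg : f =ᵐ[circleMeasure] ⇑g := by
    filter_upwards [hdiff] with x hx
    have h0 : f x - g x = 0 := hx
    exact sub_eq_zero.mp h0
  exact (Lp.memLp g).ae_eq hfg.symm

open scoped ComplexConjugate

/-- Fourier coefficients of a product of two `L²` functions, via Parseval. -/
lemma hasSum_fourierCoeff_mul {u v : Circle2Pi → ℂ} (hu : MemLp u 2 circleMeasure)
    (hv : MemLp v 2 circleMeasure) (n : ℤ) :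
    HasSum (fun m : ℤ => fourierCoeff u (n - m) * fourierCoeff v m)
      (fourierCoeff (fun x => u x * v x) n) := by
  set w : Circle2Pi → ℂ := fun t => conj (fourier (-n) t * u t) with hw
  have hwmeas : AEStronglyMeasurable w circleMeasure := by
    apply RCLike.continuous_conj.comp_aestronglyMeasurable
    exact ((fourier (-n)).continuous.aestronglyMeasurable.mul hu.aestronglyMeasurable)
  have hwnorm : ∀ x, ‖w x‖ = ‖u x‖ := by
    intro x
    simp only [hw, RCLike.norm_conj, norm_mul, norm_fourier_apply, one_mul]
  have hwmem : MemLp w 2 circleMeasure :=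
    hu.of_le hwmeas (Filter.Eventually.of_forall (fun x => (hwnorm x).le))
  set X : Lp ℂ 2 circleMeasure := hwmem.toLp w with hX
  set Y : Lp ℂ 2 circleMeasure := hv.toLp v with hY
  have hwcoeff : ∀ m : ℤ, fourierCoeff w m = conj (fourierCoeff u (n - m)) := by
    intro m
    rw [fourierCoeff_eq_integral_mul]
    calc ∫ t, fourier (-m) t * w t ∂circleMeasure
        = ∫ t, conj (fourier (m - n) t * u t) ∂circleMeasure := by
          apply integral_congr_ae
          filter_upwards with t
          simp only [hw, map_mul, ← fourier_neg]
          rw [show (-(m - n) : ℤ) = -m + n from by omega, fourier_add, neg_neg]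
          ring
      _ = conj (∫ t, fourier (m - n) t * u t ∂circleMeasure) := integral_conj
      _ = conj (fourierCoeff u (n - m)) := by
          rw [fourierCoeff_eq_integral_mul, neg_sub]
  have hXY : (inner ℂ X Y : ℂ) = fourierCoeff (fun x => u x * v x) n := by
    rw [MeasureTheory.L2.inner_def, fourierCoeff_eq_integral_mul]
    apply integral_congr_ae
    filter_upwards [hwmem.coeFn_toLp, hv.coeFn_toLp] with t h1 h2
    rw [RCLike.inner_apply, h1, h2]
    simp only [hw, Complex.conj_conj, map_mul]
    ring
  have key := lp.hasSum_inner (𝕜 := ℂ) (fourierBasis.repr X) (fourierBasis.repr Y)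
  have hterm : ∀ m : ℤ,
      (inner ℂ (fourierBasis.repr X m) (fourierBasis.repr Y m) : ℂ)
        = fourierCoeff u (n - m) * fourierCoeff v m := by
    intro m
    rw [RCLike.inner_apply', fourierBasis_repr, fourierBasis_repr,
      fourierCoeff_congr_ae' hwmem.coeFn_toLp m, fourierCoeff_congr_ae' hv.coeFn_toLp m,
      hwcoeff m, Complex.conj_conj]
  have hsum : (inner ℂ (fourierBasis.repr X) (fourierBasis.repr Y) : ℂ)
      = fourierCoeff (fun x => u x * v x) n := by
    rw [LinearIsometryEquiv.inner_map_map, hXY]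
  simp only [hterm, hsum] at key
  exact key

/-- Transfer of coefficient domination through products. -/
lemma dom_mul {u v U V : Circle2Pi → ℂ}
    (hu : MemLp u 2 circleMeasure) (hv : MemLp v 2 circleMeasure)
    (hU : MemLp U 2 circleMeasure) (hV : MemLp V 2 circleMeasure)
    (hdu : ∀ n, (fourierCoeff U n).im = 0 ∧ ‖fourierCoeff u n‖ ≤ (fourierCoeff U n).re)
    (hdv : ∀ n, (fourierCoeff V n).im = 0 ∧ ‖fourierCoeff v n‖ ≤ (fourierCoeff V n).re)
    (n : ℤ) :
    (fourierCoeff (fun x => U x * V x) n).im = 0 ∧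
      ‖fourierCoeff (fun x => u x * v x) n‖ ≤ (fourierCoeff (fun x => U x * V x) n).re := by
  have hS := hasSum_fourierCoeff_mul hu hv n
  have hSU := hasSum_fourierCoeff_mul hU hV n
  -- term-by-term facts
  have hterm_im : ∀ m : ℤ, (fourierCoeff U (n - m) * fourierCoeff V m).im = 0 := by
    intro m
    rw [Complex.mul_im, (hdu (n - m)).1, (hdv m).1]
    ring
  have hterm_re : ∀ m : ℤ, (fourierCoeff U (n - m) * fourierCoeff V m).re
      = (fourierCoeff U (n - m)).re * (fourierCoeff V m).re := by
    intro m
    rw [Complex.mul_re, (hdu (n - m)).1, (hdv m).1]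
    ring
  have him : (fourierCoeff (fun x => U x * V x) n).im = 0 := by
    have h2 := hSU.mapL Complex.imCLM
    simp only [Complex.imCLM_apply, hterm_im] at h2
    exact (h2.unique hasSum_zero).symm ▸ rfl
  have hre : HasSum (fun m => (fourierCoeff U (n - m)).re * (fourierCoeff V m).re)
      ((fourierCoeff (fun x => U x * V x) n).re) := by
    have h2 := hSU.mapL Complex.reCLM
    simp only [Complex.reCLM_apply, hterm_re] at h2
    exact h2
  have hbound : ∀ m : ℤ, ‖fourierCoeff u (n - m) * fourierCoeff v m‖
      ≤ (fourierCoeff U (n - m)).re * (fourierCoeff V m).re := by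
    intro m
    rw [norm_mul]
    exact mul_le_mul (hdu (n - m)).2 (hdv m).2 (norm_nonneg _)
      ((norm_nonneg _).trans (hdu (n - m)).2)
  have hsummable : Summable (fun m : ℤ => ‖fourierCoeff u (n - m) * fourierCoeff v m‖) :=
    Summable.of_nonneg_of_le (fun m => norm_nonneg _) hbound hre.summable
  refine ⟨him, ?_⟩
  calc ‖fourierCoeff (fun x => u x * v x) n‖
      = ‖∑' m : ℤ, fourierCoeff u (n - m) * fourierCoeff v m‖ := by rw [hS.tsum_eq]
    _ ≤ ∑' m : ℤ, ‖fourierCoeff u (n - m) * fourierCoeff v m‖ := norm_tsum_le_tsum_norm hsummable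
    _ ≤ ∑' m : ℤ, (fourierCoeff U (n - m)).re * (fourierCoeff V m).re :=
        Summable.tsum_le_tsum hbound hsummable hre.summable
    _ = (fourierCoeff (fun x => U x * V x) n).re := hre.tsum_eq

lemma memℒp_pow_two {F : Circle2Pi → ℂ} {j : ℕ} (hj : 1 ≤ j)
    (hF : MemLp F (2 * j : ℝ≥0∞) circleMeasure) {k : ℕ} (hk1 : 1 ≤ k) (hkj : k ≤ j) :
    MemLp (fun x => F x ^ k) 2 circleMeasure := by
  have hk0 : ((k : ℝ≥0∞)) ≠ 0 := by
    simp only [ne_eq, Nat.cast_eq_zero]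
    omega
  have hktop : ((k : ℝ≥0∞)) ≠ ⊤ := by simp
  have h1 : MemLp (fun x => ‖F x‖ ^ ((k : ℝ≥0∞)).toReal) ((2 * j : ℝ≥0∞) / k) circleMeasure :=
    (memLp_norm_rpow_iff hF.aestronglyMeasurable hk0 hktop).2 hF
  have hle : (2 : ℝ≥0∞) ≤ (2 * j : ℝ≥0∞) / k := by
    rw [ENNReal.le_div_iff_mul_le (Or.inl hk0) (Or.inl hktop)]
    exact mul_le_mul_right (by exact_mod_cast hkj : (k : ℝ≥0∞) ≤ j) 2
  have h2 : MemLp (fun x => ‖F x‖ ^ ((k : ℝ≥0∞)).toReal) 2 circleMeasure :=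
    h1.mono_exponent hle
  have hmeas : AEStronglyMeasurable (fun x => F x ^ k) circleMeasure :=
    hF.aestronglyMeasurable.pow k
  refine h2.of_le hmeas ?_
  filter_upwards with x
  rw [norm_pow]
  have : ((k : ℝ≥0∞)).toReal = (k : ℝ) := by simp
  rw [this, Real.norm_eq_abs, Real.rpow_natCast, _root_.abs_of_nonneg (by positivity)]

/-- upper majorant property with constant 1 in `L^{2j}`: if
`F ∈ L^{2j}` majorizes an integrable `f`, then `f ∈ L^{2j}` and `‖f‖_{2j} ≤ ‖F‖_{2j}`. -/
theorem upper_majorant_property_even (j : ℕ) (hj : 1 ≤ j)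
    (F : Circle2Pi → ℂ) (hF : MemLp F (2 * j : ℝ≥0∞) circleMeasure)
    (f : Circle2Pi → ℂ) (hf : Integrable f circleMeasure)
    (hmaj : IsMajorant F f) :
    MemLp f (2 * j : ℝ≥0∞) circleMeasure ∧
      eLpNorm f (2 * j : ℝ≥0∞) circleMeasure ≤ eLpNorm F (2 * j : ℝ≥0∞) circleMeasure := by
  have hjR : (0:ℝ) < (j:ℝ) := by exact_mod_cast hj
  have hjne : (j : ℝ≥0∞) ≠ 0 := by
    simp only [ne_eq, Nat.cast_eq_zero]; omega
  have htwo_le : (2 : ℝ≥0∞) ≤ 2 * j := by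
    conv_lhs => rw [← mul_one (2 : ℝ≥0∞)]
    exact mul_le_mul_right (by exact_mod_cast hj : (1 : ℝ≥0∞) ≤ j) 2
  have hF2 : MemLp F 2 circleMeasure := hF.mono_exponent htwo_le
  have hdom1 : ∀ n, (fourierCoeff F n).im = 0 ∧
      ‖fourierCoeff f n‖ ≤ (fourierCoeff F n).re := fun n =>
    ⟨(hmaj n).1, by exact (hmaj n).2⟩
  -- comparison of square sums
  have hsq : ∀ {u U : Circle2Pi → ℂ},
      (∀ n, ‖fourierCoeff u n‖ ≤ (fourierCoeff U n).re) → MemLp U 2 circleMeasure →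
      Summable (fun n : ℤ => ‖fourierCoeff u n‖ ^ 2) := by
    intro u U hd hU
    refine Summable.of_nonneg_of_le (fun n => by positivity) (fun n => ?_)
      (summable_sq_fourierCoeff hU)
    have h1 : ‖fourierCoeff u n‖ ≤ ‖fourierCoeff U n‖ := by
      refine (hd n).trans ?_
      exact Complex.re_le_norm _
    exact pow_le_pow_left₀ (norm_nonneg _) h1 2
  have hf2 : MemLp f 2 circleMeasure :=
    memℒp_two_of_summable_sq hf (hsq (fun n => (hdom1 n).2) hF2)
  -- the bootstrap
  have main : ∀ k, 1 ≤ k → k ≤ j →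
      MemLp (fun x => f x ^ k) 2 circleMeasure ∧
      (∀ n, (fourierCoeff (fun x => F x ^ k) n).im = 0 ∧
        ‖fourierCoeff (fun x => f x ^ k) n‖ ≤ (fourierCoeff (fun x => F x ^ k) n).re) := by
    intro k hk1
    induction k with
    | zero => omega
    | succ k IH =>
      intro hkj
      by_cases hk0 : k = 0
      · subst hk0
        simp only [zero_add, pow_one]
        exact ⟨hf2, hdom1⟩
      · have hk1' : 1 ≤ k := by omega
        obtain ⟨hfk2, hdomk⟩ := IH hk1' (by omega)
        have hFk2 : MemLp (fun x => F x ^ k) 2 circleMeasure :=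
          memℒp_pow_two hj hF hk1' (by omega)
        have hFk12 : MemLp (fun x => F x ^ (k+1)) 2 circleMeasure :=
          memℒp_pow_two hj hF (by omega) hkj
        have hdom' := dom_mul hfk2 hf2 hFk2 hF2 hdomk hdom1
        have hfeq : (fun x => f x ^ k * f x) = (fun x => f x ^ (k+1)) :=
          funext fun x => (pow_succ _ _).symm
        have hFeq : (fun x => F x ^ k * F x) = (fun x => F x ^ (k+1)) :=
          funext fun x => (pow_succ _ _).symm
        rw [hfeq, hFeq] at hdom'
        have hint : Integrable (fun x => f x ^ (k+1)) circleMeasure := by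
          have hsm : MemLp ((fun x => f x ^ k) • f) 1 circleMeasure :=
            hf2.smul hfk2
          refine (memLp_one_iff_integrable.mp hsm).congr ?_
          filter_upwards with x
          show f x ^ k • f x = f x ^ (k+1)
          rw [smul_eq_mul, ← pow_succ]
        have hmem : MemLp (fun x => f x ^ (k+1)) 2 circleMeasure :=
          memℒp_two_of_summable_sq hint (hsq (fun n => (hdom' n).2) hFk12)
        exact ⟨hmem, hdom'⟩
  obtain ⟨hfj2, hdomj⟩ := main j hj le_rfl
  have hFj2 : MemLp (fun x => F x ^ j) 2 circleMeasure := memℒp_pow_two hj hF hj le_rfl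
  -- Parseval comparison
  have hcoeff_le : ∀ n : ℤ, ‖fourierCoeff (fun x => f x ^ j) n‖ ^ 2
      ≤ ‖fourierCoeff (fun x => F x ^ j) n‖ ^ 2 := by
    intro n
    refine pow_le_pow_left₀ (norm_nonneg _) ((hdomj n).2.trans ?_) 2
    exact Complex.re_le_norm _
  have hParseval : ∀ {u : Circle2Pi → ℂ} (hu : MemLp u 2 circleMeasure),
      ∑' n : ℤ, ‖fourierCoeff u n‖ ^ 2 = ∫ t, ‖u t‖ ^ 2 ∂circleMeasure := by
    intro u hu
    have h := tsum_sq_fourierCoeff (hu.toLp u)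
    have h1 : ∀ n : ℤ, ‖fourierCoeff (⇑(hu.toLp u) : Circle2Pi → ℂ) n‖ ^ 2
        = ‖fourierCoeff u n‖ ^ 2 := fun n => by
      rw [fourierCoeff_congr_ae' hu.coeFn_toLp]
    have h2 : ∫ t, ‖(⇑(hu.toLp u) : Circle2Pi → ℂ) t‖ ^ 2 ∂circleMeasure
        = ∫ t, ‖u t‖ ^ 2 ∂circleMeasure := by
      apply integral_congr_ae
      filter_upwards [hu.coeFn_toLp] with t ht
      rw [ht]
    rw [← h2, ← h]
    exact tsum_congr (fun n => (h1 n).symm)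
  have hint_le : ∫ t, ‖f t ^ j‖ ^ 2 ∂circleMeasure ≤ ∫ t, ‖F t ^ j‖ ^ 2 ∂circleMeasure := by
    rw [← hParseval hfj2, ← hParseval hFj2]
    exact Summable.tsum_le_tsum hcoeff_le
      (hsq (fun n => (hdomj n).2) hFj2) (summable_sq_fourierCoeff hFj2)
  -- convert to eLpNorm inequality at exponent 2
  have heLp_le : eLpNorm (fun x => f x ^ j) 2 circleMeasure
      ≤ eLpNorm (fun x => F x ^ j) 2 circleMeasure := by
    rw [MemLp.eLpNorm_eq_integral_rpow_norm two_ne_zero ENNReal.ofNat_ne_top hfj2,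
      MemLp.eLpNorm_eq_integral_rpow_norm two_ne_zero ENNReal.ofNat_ne_top hFj2]
    apply ENNReal.ofReal_le_ofReal
    apply Real.rpow_le_rpow (by positivity)
    · have h2 : (2 : ℝ≥0∞).toReal = (2:ℝ) := by simp
      rw [h2]
      have hconv : ∀ (u : Circle2Pi → ℂ),
          (∫ t, ‖u t ^ j‖ ^ (2:ℝ) ∂circleMeasure) = ∫ t, ‖u t ^ j‖ ^ 2 ∂circleMeasure := by
        intro u
        apply integral_congr_ae
        filter_upwards with t
        rw [← Real.rpow_natCast ‖u t ^ j‖ 2]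
        norm_num
      rw [hconv, hconv]
      exact hint_le
    · positivity
  -- now relate eLpNorm f (2j) with eLpNorm (f^j) 2
  have hrel : ∀ (u : Circle2Pi → ℂ), AEStronglyMeasurable u circleMeasure →
      eLpNorm (fun x => u x ^ j) 2 circleMeasure
        = eLpNorm u (2 * j : ℝ≥0∞) circleMeasure ^ (j:ℝ) := by
    intro u hu
    have h1 : eLpNorm (fun x => ‖u x‖ ^ (j:ℝ)) 2 circleMeasure
        = eLpNorm u (2 * ENNReal.ofReal (j:ℝ)) circleMeasure ^ (j:ℝ) :=
      eLpNorm_norm_rpow u hjR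
    have h2 : eLpNorm (fun x => u x ^ j) 2 circleMeasure
        = eLpNorm (fun x => ‖u x‖ ^ (j:ℝ)) 2 circleMeasure := by
      apply eLpNorm_congr_norm_ae
      filter_upwards with x
      rw [norm_pow, Real.norm_eq_abs, Real.rpow_natCast,
        _root_.abs_of_nonneg (by positivity)]
    rw [h2, h1, ENNReal.ofReal_natCast]
  -- membership
  have hmemf : MemLp f (2 * j : ℝ≥0∞) circleMeasure := by
    have hiff := memLp_norm_rpow_iff (q := (j : ℝ≥0∞)) (p := (2 * j : ℝ≥0∞))
      hf.aestronglyMeasurable hjne (by simp)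
    have hdiv : (2 * j : ℝ≥0∞) / j = 2 := by
      rw [mul_div_assoc, ENNReal.div_self hjne (by simp), mul_one]
    rw [hdiv] at hiff
    refine hiff.mp ?_
    have htR : ((j : ℝ≥0∞)).toReal = (j:ℝ) := by simp
    rw [htR]
    refine hfj2.of_le ?_ ?_
    · exact (continuous_id.rpow_const (fun x => Or.inr (by positivity))).comp_aestronglyMeasurable
        hf.aestronglyMeasurable.norm
    · filter_upwards with x
      rw [norm_pow, Real.norm_eq_abs, Real.rpow_natCast,
        _root_.abs_of_nonneg (by positivity)]
  refine ⟨hmemf, ?_⟩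
  have hfinal := heLp_le
  rw [hrel f hf.aestronglyMeasurable, hrel F hF.aestronglyMeasurable] at hfinal
  exact (ENNReal.rpow_le_rpow_iff hjR).mp hfinal
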